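/- Let V be a finite-dimensional real inner product space of even dimension 2m, and A : V → V skew-adjoint and invertible. Then there exists a basis {e₁, A e₁, …, e_m, A e_m} of V consisting of mutually orthogonal nonzero vectors, where each e_i is an eigenvector of Q := -A². Moreover for each i, ⟨A e_i, A e_i⟩ = λ_i ⟨e_i, e_i⟩ where λ_i is the eigenvalue of Q at e_i. -/

import Mathlib

open scoped RealInnerProductSpace
open Module

universe u
theorem aux11 (m : ℕ) : ∀ (V : Type u) [NormedAddCommGroup V] [InnerProductSpace ℝ V]
    [FiniteDimensional ℝ V], Module.finrank ℝ V = 2 * m → ∀ A : V →ₗ[ℝ] V,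
    (∀ x y : V, ⟪A x, y⟫ = -⟪x, A y⟫) → Function.Injective A →
    ∃ (b : Basis (Fin m ⊕ Fin m) ℝ V) (lam : Fin m → ℝ),
      (∀ i : Fin m, b (Sum.inr i) = A (b (Sum.inl i))) ∧
      (∀ j k : Fin m ⊕ Fin m, j ≠ k → ⟪b j, b k⟫ = 0) ∧
      (∀ j : Fin m ⊕ Fin m, b j ≠ 0) ∧
      (∀ i : Fin m, -(A (A (b (Sum.inl i)))) = lam i • b (Sum.inl i)) := by
  induction m with
  | zero =>
    intro V _ _ _ hdim A hA hAinj
    have : Subsingleton V := by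
      rw [← Module.finrank_zero_iff (R := ℝ)]; omega
    exact ⟨Basis.empty V, fun i => 0, fun i => i.elim0, fun j => j.elim (fun i => i.elim0) (fun i => i.elim0),
      fun j => j.elim (fun i => i.elim0) (fun i => i.elim0), fun i => i.elim0⟩
  | succ m ih =>
    intro V _ _ _ hdim A hA hAinj
    have : Nontrivial V := Module.nontrivial_of_finrank_pos (R := ℝ) (by omega)
    set Q : V →ₗ[ℝ] V := -(A ∘ₗ A) with hQdef
    have hQapp : ∀ x, Q x = -(A (A x)) := fun x => rfl
    have hQsym : Q.IsSymmetric := by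
      intro x y
      simp only [hQapp, inner_neg_left, inner_neg_right, real_inner_comm (A (A x)) y]
      rw [hA (A x) y, neg_neg, hA x (A y)]
    obtain ⟨mu, hmu⟩ : ∃ μ : ℝ, Module.End.HasEigenvalue Q μ :=
      ⟨_, hQsym.hasEigenvalue_iSup_of_finiteDimensional⟩
    obtain ⟨e, heQ, he0⟩ := hmu.exists_hasEigenvector
    have heQ' : Q e = mu • e := (Module.End.mem_eigenspace_iff.mp heQ)
    have hAe0 : A e ≠ 0 := fun h => he0 (hAinj (by simpa using h))
    have heAe : ⟪e, A e⟫ = 0 := by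
      have h1 := hA e e
      have h2 := real_inner_comm e (A e)
      linarith
    set v2 : Fin 2 → V := ![e, A e] with hv2
    set U : Submodule ℝ V := Submodule.span ℝ (Set.range v2) with hU
    have heU : e ∈ U := Submodule.subset_span ⟨0, rfl⟩
    have hAeU : A e ∈ U := Submodule.subset_span ⟨1, rfl⟩
    have hAU : ∀ u ∈ U, A u ∈ U := by
      intro u hu
      have : U ≤ U.comap A := by
        rw [hU, Submodule.span_le]
        rintro x ⟨i, rfl⟩
        fin_cases i
        · exact hAeU
        · show A (A e) ∈ U
          have : A (A e) = -(mu • e) := by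
            have := heQ'; rw [hQapp] at this; rw [← this, neg_neg]
          rw [this]
          exact neg_mem (Submodule.smul_mem _ _ heU)
      exact this hu
    have hAUperp : ∀ x ∈ Uᗮ, A x ∈ Uᗮ := by
      intro x hx
      rw [Submodule.mem_orthogonal]
      intro u hu
      rw [real_inner_comm, hA x u]
      rw [Submodule.mem_orthogonal] at hx
      rw [real_inner_comm]
      simp [hx _ (hAU u hu)]
    set A' : Uᗮ →ₗ[ℝ] Uᗮ := A.restrict (fun x hx => hAUperp x hx) with hA'
    have hA'coe : ∀ x : Uᗮ, (A' x : V) = A (x : V) := fun x => rfl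
    have hUdim : finrank ℝ U = 2 := by
      rw [hU, finrank_span_eq_card, Fintype.card_fin]
      refine linearIndependent_of_ne_zero_of_inner_eq_zero ?_ ?_
      · intro i
        fin_cases i
        · simpa [hv2] using he0
        · simpa [hv2] using hAe0
      · intro i j hij
        fin_cases i <;> fin_cases j
        · exact absurd rfl hij
        · simpa [hv2] using heAe
        · show ⟪v2 1, v2 0⟫ = 0
          simp only [hv2, Matrix.cons_val_one, Matrix.cons_val_zero, Matrix.head_cons]
          rw [real_inner_comm]; exact heAe
        · exact absurd rfl hij
    have hUperpdim : finrank ℝ Uᗮ = 2 * m := by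
      have := Submodule.finrank_add_finrank_orthogonal U
      omega
    obtain ⟨b', lam', hb'1, hb'2, hb'3, hb'4⟩ := ih Uᗮ hUperpdim A'
      (fun x y => by rw [Submodule.coe_inner, Submodule.coe_inner, hA'coe, hA'coe, hA])
      (fun x y hxy => Subtype.ext (hAinj (by simpa [hA'coe] using congrArg (Subtype.val) hxy)))
    set f : Fin (m+1) → V := Fin.cases e (fun i => (b' (Sum.inl i) : V)) with hf
    set g : Fin (m+1) → V := Fin.cases (A e) (fun i => (b' (Sum.inr i) : V)) with hg
    set v : Fin (m+1) ⊕ Fin (m+1) → V := Sum.elim f g with hv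
    have horthU : ∀ x ∈ U, ∀ j, ⟪x, (b' j : V)⟫ = 0 := fun x hx j =>
      (Submodule.mem_orthogonal _ _).mp (b' j).2 x hx
    have horthU' : ∀ x ∈ U, ∀ j, ⟪(b' j : V), x⟫ = 0 := fun x hx j => by
      rw [real_inner_comm]; exact horthU x hx j
    have hbborth : ∀ j k, j ≠ k → ⟪(b' j : V), (b' k : V)⟫ = 0 := fun j k hjk => by
      rw [← Submodule.coe_inner]; exact hb'2 j k hjk
    have hvnz : ∀ j, v j ≠ 0 := by
      rintro (i | i) <;> induction i using Fin.cases <;>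
        simp only [hv, hf, hg, Sum.elim_inl, Sum.elim_inr, Fin.cases_zero, Fin.cases_succ]
      · exact he0
      · simpa [Submodule.coe_eq_zero] using hb'3 _
      · exact hAe0
      · simpa [Submodule.coe_eq_zero] using hb'3 _
    have hAeE : ⟪A e, e⟫ = 0 := by rw [real_inner_comm]; exact heAe
    have horth : ∀ j k, j ≠ k → ⟪v j, v k⟫ = 0 := by
      rintro (i | i) (k | k) hjk <;> induction i using Fin.cases <;> induction k using Fin.cases <;>
        simp only [hv, hf, hg, Sum.elim_inl, Sum.elim_inr, Fin.cases_zero, Fin.cases_succ]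
      · exact absurd rfl hjk
      · exact horthU e heU _
      · exact horthU' e heU _
      · exact hbborth _ _ (by simpa [Fin.succ_inj] using hjk)
      · exact heAe
      · exact horthU e heU _
      · exact horthU' (A e) hAeU _
      · exact hbborth _ _ (by simp)
      · exact hAeE
      · exact horthU (A e) hAeU _
      · exact horthU' e heU _
      · exact hbborth _ _ (by simp)
      · exact absurd rfl hjk
      · exact horthU (A e) hAeU _
      · exact horthU' (A e) hAeU _
      · exact hbborth _ _ (by simpa [Fin.succ_inj] using hjk)
    have hli : LinearIndependent ℝ v :=
      linearIndependent_of_ne_zero_of_inner_eq_zero hvnz (fun j k hjk => horth j k hjk)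
    have hcard : Fintype.card (Fin (m+1) ⊕ Fin (m+1)) = finrank ℝ V := by
      simp [hdim]; omega
    set b := basisOfLinearIndependentOfCardEqFinrank hli hcard with hb
    have hbco : ∀ j, b j = v j := fun j => by
      rw [hb, coe_basisOfLinearIndependentOfCardEqFinrank]
    refine ⟨b, Fin.cases mu lam', ?_, ?_, ?_, ?_⟩
    · intro i
      induction i using Fin.cases with
      | zero => simp only [hbco, hv, hf, hg, Sum.elim_inl, Sum.elim_inr, Fin.cases_zero]
      | succ i =>
        simp only [hbco, hv, hf, hg, Sum.elim_inl, Sum.elim_inr, Fin.cases_succ]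
        rw [hb'1 i]
        exact hA'coe _
    · intro j k hjk; rw [hbco, hbco]; exact horth j k hjk
    · intro j; rw [hbco]; exact hvnz j
    · intro i
      induction i using Fin.cases with
      | zero =>
        simp only [hbco, hv, hf, Sum.elim_inl, Fin.cases_zero]
        rw [← hQapp]; exact heQ'
      | succ i =>
        simp only [hbco, hv, hf, Sum.elim_inl, Fin.cases_succ]
        have h4 := hb'4 i
        have := congrArg (Subtype.val) h4
        simpa [hA'coe] using this

theorem stmt_11 {V : Type*} [NormedAddCommGroup V] [InnerProductSpace ℝ V]
    [FiniteDimensional ℝ V] (m : ℕ)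
    (hdim : Module.finrank ℝ V = 2 * m)
    (A Q : V →ₗ[ℝ] V)
    (hA : ∀ x y : V, ⟪A x, y⟫ = -⟪x, A y⟫)
    (hAinv : Function.Bijective A)
    (hQ : ∀ x : V, Q x = -(A (A x))) :
    ∃ (b : Basis (Fin m ⊕ Fin m) ℝ V) (lam : Fin m → ℝ),
      (∀ i : Fin m, b (Sum.inr i) = A (b (Sum.inl i))) ∧
      (∀ j k : Fin m ⊕ Fin m, j ≠ k → ⟪b j, b k⟫ = 0) ∧
      (∀ j : Fin m ⊕ Fin m, b j ≠ 0) ∧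
      (∀ i : Fin m, Q (b (Sum.inl i)) = lam i • b (Sum.inl i)) ∧
      (∀ i : Fin m,
        ⟪A (b (Sum.inl i)), A (b (Sum.inl i))⟫ = lam i * ⟪b (Sum.inl i), b (Sum.inl i)⟫) := by
  obtain ⟨b, lam, h1, h2, h3, h4⟩ := aux11 m V hdim A hA hAinv.injective
  refine ⟨b, lam, h1, h2, h3, fun i => by rw [hQ]; exact h4 i, fun i => ?_⟩
  set x := b (Sum.inl i) with hx
  have hAA : A (A x) = -(lam i • x) := by rw [← h4 i, neg_neg]
  rw [hA x (A x), hAA]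
  rw [inner_neg_right, real_inner_smul_right]
  ring
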